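/- Let σ ∈ ℝ with σ ≠ 1/2, let k ∈ ℕ, and let f : (Fin k → Bool) → ℝ. Define weights w(false) = (1−σ)/(1−2σ), w(true) = −σ/(1−2σ) and u(false) = 1−σ, u(true) = σ, and define g : (Fin k → Bool) → ℝ by g(y) = Σ_{e : Fin k → Bool} (Π_{i} w(e(i))) · f(y ⊕ e), where (y ⊕ e)(i) = xor(y(i), e(i)) denotes bitwise XOR. Then for every x : Fin k → Bool, Σ_{e' : Fin k → Bool} (Π_{i} u(e'(i))) · g(x ⊕ e') = f(x). -/

import Mathlib

theorem stmt4 (σ : ℝ) (hσ : σ ≠ 1 / 2) (k : ℕ) (f : (Fin k → Bool) → ℝ)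
    (w u : Bool → ℝ)
    (hwf : w false = (1 - σ) / (1 - 2 * σ)) (hwt : w true = -σ / (1 - 2 * σ))
    (huf : u false = 1 - σ) (hut : u true = σ)
    (g : (Fin k → Bool) → ℝ)
    (hg : ∀ y : Fin k → Bool,
      g y = ∑ e : Fin k → Bool, (∏ i, w (e i)) * f (fun i => xor (y i) (e i)))
    (x : Fin k → Bool) :
    ∑ e' : Fin k → Bool, (∏ i, u (e' i)) * g (fun i => xor (x i) (e' i)) = f x := by
  have h2σ : (1 - 2 * σ) ≠ 0 := fun h => hσ (by linarith)
  simp only [hg, Finset.mul_sum]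
  have key : ∀ e' : Fin k → Bool,
      (∑ e : Fin k → Bool,
        (∏ i, u (e' i)) * ((∏ i, w (e i)) * f (fun i => xor (xor (x i) (e' i)) (e i))))
      = ∑ d : Fin k → Bool,
        (∏ i, u (e' i) * w (xor (e' i) (d i))) * f (fun i => xor (x i) (d i)) := by
    intro e'
    refine Fintype.sum_equiv
      ⟨fun d i => xor (e' i) (d i), fun d i => xor (e' i) (d i),
        fun d => by funext i; simp [← Bool.xor_assoc],
        fun d => by funext i; simp [← Bool.xor_assoc]⟩ _ _ (fun e => ?_)
    simp only [Equiv.coe_fn_mk, ← Bool.xor_assoc, Bool.xor_self, Bool.false_xor,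
      Finset.prod_mul_distrib]
    ring
  rw [Finset.sum_congr rfl (fun e' _ => key e'), Finset.sum_comm]
  have hpt : ∀ c : Bool, (∑ b : Bool, u b * w (xor b c)) = if c then 0 else 1 := by
    intro c
    cases c <;>
      simp [Fintype.sum_bool, huf, hut, hwf, hwt] <;>
        field_simp [show (1 - σ * 2) ≠ 0 from fun h => h2σ (by linarith)] <;> ring
  have hcol : ∀ d : Fin k → Bool,
      (∑ e' : Fin k → Bool, (∏ i, u (e' i) * w (xor (e' i) (d i)))) =
        if d = (fun _ => false) then 1 else 0 := by
    intro d
    have hps := Finset.prod_univ_sum (fun _ : Fin k => (Finset.univ : Finset Bool))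
      (fun i b => u b * w (xor b (d i)))
    rw [← Fintype.piFinset_univ, ← hps,
      Finset.prod_congr rfl (fun i _ => hpt (d i))]
    by_cases hd : d = (fun _ => false)
    · simp [hd]
    · simp only [hd, if_false]
      obtain ⟨i, hi⟩ : ∃ i, d i = true := by
        by_contra h
        push_neg at h
        exact hd (funext fun i => by simpa using h i)
      exact Finset.prod_eq_zero (Finset.mem_univ i) (by simp [hi])
  calc ∑ d : Fin k → Bool, ∑ e' : Fin k → Bool,
        (∏ i, u (e' i) * w (xor (e' i) (d i))) * f (fun i => xor (x i) (d i))
      = ∑ d : Fin k → Bool,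
        (if d = (fun _ => false) then (1:ℝ) else 0) * f (fun i => xor (x i) (d i)) := by
        refine Finset.sum_congr rfl (fun d _ => ?_)
        rw [← Finset.sum_mul, hcol d]
    _ = f x := by
        rw [Finset.sum_eq_single (fun _ => false)]
        · simp
        · intro d _ hd; simp [hd]
        · intro h; exact absurd (Finset.mem_univ _) h
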